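/- Strictly-decreasing refactoring when every reference is introduced only once: suppose that (a) for every reference k with B k ≠ none, L contains no add on k, and (b) for every reference k, L contains at most one add on k (at most one element of the form (c, k, some d)). Then there exist a base program B' and a list L' such that every operation of L' is a remove (payload none), for every product p, variant B' L' p = variant B L p, and for every reference k, either B' k = B k, or B k = none and there exist c and d with (c, k, some d) ∈ L and B' k = some d. -/

import Mathlib

open Classical in
/-- The variant generated for product `p` from base program `B` and list `L` of
conditional delta operations. -/
noncomputable def variant {α β ρ : Type*} (B : α → Option β)
    (L : List ((ρ → Prop) × α × Option β)) (p : ρ) : α → Option β :=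
  L.foldl (fun P op => if op.1 p then Function.update P op.2.1 op.2.2 else P) B

open Classical

private lemma variant_cons {α β ρ : Type*} (B : α → Option β)
    (op : (ρ → Prop) × α × Option β) (L : List ((ρ → Prop) × α × Option β)) (p : ρ) :
    variant B (op :: L) p =
      variant (if op.1 p then Function.update B op.2.1 op.2.2 else B) L p := rfl

private lemma variant_inactive {α β ρ : Type*} (p : ρ) (k : α) :
    ∀ (L : List ((ρ → Prop) × α × Option β)) (B : α → Option β),
      (∀ op ∈ L, op.2.1 = k → ¬ op.1 p) → variant B L p k = B k := by
  intro L
  induction L with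
  | nil => intro B _; rfl
  | cons op t ih =>
    intro B h
    rw [variant_cons, ih _ (fun o ho => h o (List.mem_cons_of_mem _ ho))]
    split
    · next hp =>
      refine Function.update_of_ne ?_ _ _
      intro hk
      exact h op (List.mem_cons_self) hk.symm hp
    · rfl

private lemma variant_removes_active {α β ρ : Type*} (p : ρ) (k : α) :
    ∀ (L : List ((ρ → Prop) × α × Option β)) (B : α → Option β),
      (∀ op ∈ L, op.2.2 = none) →
      (∃ op ∈ L, op.2.1 = k ∧ op.1 p) → variant B L p k = none := by
  intro L
  induction L with
  | nil =>
    rintro B _ ⟨op, h, -⟩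
    exact absurd h List.not_mem_nil
  | cons op t ih =>
    intro B hnone hex
    rw [variant_cons]
    by_cases hrest : ∃ o ∈ t, o.2.1 = k ∧ o.1 p
    · exact ih _ (fun o ho => hnone o (List.mem_cons_of_mem _ ho)) hrest
    · obtain ⟨o, ho, hk, hp⟩ := hex
      rcases List.mem_cons.mp ho with rfl | ho'
      · push_neg at hrest
        rw [variant_inactive p k t _ (fun o' ho' hk' => hrest o' ho' hk')]
        rw [if_pos hp, hk, Function.update_self]
        exact hnone o (List.mem_cons_self)
      · exact absurd ⟨o, ho', hk, hp⟩ hrest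

private lemma variant_some_mem {α β ρ : Type*} (p : ρ) (k : α) (d : β) :
    ∀ (L : List ((ρ → Prop) × α × Option β)) (B : α → Option β),
      variant B L p k = some d →
      (∃ c, (c, k, some d) ∈ L) ∨ B k = some d := by
  intro L
  induction L with
  | nil => intro B h; exact Or.inr h
  | cons op t ih =>
    intro B h
    rw [variant_cons] at h
    rcases ih _ h with ⟨c, hc⟩ | hB
    · exact Or.inl ⟨c, List.mem_cons_of_mem _ hc⟩
    · by_cases hp : op.1 p
      · rw [if_pos hp] at hB
        by_cases hk : op.2.1 = k
        · rw [← hk, Function.update_self] at hB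
          refine Or.inl ⟨op.1, ?_⟩
          have : op = (op.1, k, some d) := by
            rw [← hk, ← hB]
          rw [← this]
          exact List.mem_cons_self
        · rw [Function.update_of_ne (fun h' => hk h'.symm)] at hB
          exact Or.inr hB
      · rw [if_neg hp] at hB
        exact Or.inr hB

private lemma countP_le_one_unique {γ : Type*} (P : γ → Bool) :
    ∀ (L : List γ), L.countP P ≤ 1 → ∀ a ∈ L, ∀ b ∈ L, P a → P b → a = b := by
  intro L
  induction L with
  | nil => intro _ a ha; exact absurd ha List.not_mem_nil
  | cons x t ih =>
    intro hle a haMem b hbMem hPa hPb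
    have hcons : (x :: t).countP P = t.countP P + if P x then 1 else 0 := by
      rw [List.countP_cons]
    rcases List.mem_cons.mp haMem with rfl | ha'
    · rcases List.mem_cons.mp hbMem with rfl | hb'
      · rfl
      · exfalso
        have h1 : 0 < t.countP P := List.countP_pos_iff.mpr ⟨b, hb', hPb⟩
        rw [hcons, if_pos hPa] at hle
        omega
    · rcases List.mem_cons.mp hbMem with rfl | hb'
      · exfalso
        have h1 : 0 < t.countP P := List.countP_pos_iff.mpr ⟨a, ha', hPa⟩
        rw [hcons, if_pos hPb] at hle
        omega
      · refine ih ?_ a ha' b hb' hPa hPb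
        rw [hcons] at hle
        omega

open Classical in
/-- Strictly-decreasing refactoring when every reference is introduced only once. -/
theorem strictly_decreasing_refactoring {α β ρ : Type*} (B : α → Option β)
    (L : List ((ρ → Prop) × α × Option β))
    (ha : ∀ k : α, B k ≠ none → ∀ (c : ρ → Prop) (d : β), (c, k, some d) ∉ L)
    (hb : ∀ k : α,
      L.countP (fun op => decide (op.2.1 = k ∧ ∃ d : β, op.2.2 = some d)) ≤ 1) :
    ∃ (B' : α → Option β) (L' : List ((ρ → Prop) × α × Option β)),
      (∀ op ∈ L', op.2.2 = none) ∧
      (∀ p : ρ, variant B' L' p = variant B L p) ∧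
      (∀ k : α, B' k = B k ∨
        (B k = none ∧ ∃ (c : ρ → Prop) (d : β), (c, k, some d) ∈ L ∧ B' k = some d)) := by
  classical
  set B' : α → Option β := fun k =>
    if h : ∃ cd : (ρ → Prop) × β, (cd.1, k, some cd.2) ∈ L then some h.choose.2 else B k
    with hB'def
  set L' : List ((ρ → Prop) × α × Option β) :=
    L.map (fun op => (fun q => variant B L q op.2.1 = none, op.2.1, (none : Option β)))
    with hL'def
  have hL'none : ∀ op ∈ L', op.2.2 = none := by
    intro op hop
    rw [hL'def] at hop
    obtain ⟨o, -, rfl⟩ := List.mem_map.mp hop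
    rfl
  refine ⟨B', L', hL'none, ?_, ?_⟩
  · -- variants agree
    intro p
    funext k
    cases hV : variant B L p k with
    | none =>
      by_cases hex : ∃ op ∈ L, op.2.1 = k
      · obtain ⟨op, hop, hk⟩ := hex
        refine variant_removes_active p k L' B' hL'none ?_
        refine ⟨(fun q => variant B L q op.2.1 = none, op.2.1, (none : Option β)),
          List.mem_map.mpr ⟨op, hop, rfl⟩, hk, ?_⟩
        simpa [hk] using hV
      · push_neg at hex
        have h1 : variant B' L' p k = B' k := by
          refine variant_inactive p k L' B' ?_
          intro op' hop' hk'
          exfalso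
          obtain ⟨o, ho, rfl⟩ := List.mem_map.mp hop'
          exact hex o ho hk'
        have h2 : variant B L p k = B k := by
          refine variant_inactive p k L B ?_
          intro op hop hk'
          exact absurd hk' (hex op hop)
        have hBk : B k = none := h2 ▸ hV
        have hnoadd : ¬ ∃ cd : (ρ → Prop) × β, (cd.1, k, some cd.2) ∈ L := by
          rintro ⟨cd, hcd⟩
          exact hex _ hcd rfl
        rw [h1, hB'def]
        simp only [dif_neg hnoadd]
        exact hBk
    | some d =>
      have h1 : variant B' L' p k = B' k := by
        refine variant_inactive p k L' B' ?_
        intro op' hop' hk' hcond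
        obtain ⟨o, ho, rfl⟩ := List.mem_map.mp hop'
        simp only at hk' hcond
        rw [hk', hV] at hcond
        exact Option.some_ne_none _ hcond
      rw [h1]
      rcases variant_some_mem p k d L B hV with ⟨c, hc⟩ | hBk
      · have hadd : ∃ cd : (ρ → Prop) × β, (cd.1, k, some cd.2) ∈ L := ⟨(c, d), hc⟩
        rw [hB'def]
        simp only [dif_pos hadd]
        -- uniqueness: hadd.choose.2 = d
        have hmem := hadd.choose_spec
        have heq : (c, k, some d) = (hadd.choose.1, k, some hadd.choose.2) := by
          refine countP_le_one_unique
            (fun op => decide (op.2.1 = k ∧ ∃ d' : β, op.2.2 = some d')) L (hb k)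
            _ hc _ hmem ?_ ?_
          · simp
          · simp
        have : some d = some hadd.choose.2 := congrArg (fun x => x.2.2) heq
        rw [← this]
      · have hBne : B k ≠ none := by rw [hBk]; exact Option.some_ne_none _
        have hnoadd : ¬ ∃ cd : (ρ → Prop) × β, (cd.1, k, some cd.2) ∈ L := by
          rintro ⟨cd, hcd⟩
          exact ha k hBne cd.1 cd.2 hcd
        rw [hB'def]
        simp only [dif_neg hnoadd]
        exact hBk
  · -- relation between B' and B
    intro k
    by_cases h : ∃ cd : (ρ → Prop) × β, (cd.1, k, some cd.2) ∈ L
    · refine Or.inr ⟨?_, h.choose.1, h.choose.2, h.choose_spec, ?_⟩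
      · by_contra hne
        exact ha k hne h.choose.1 h.choose.2 h.choose_spec
      · rw [hB'def]
        simp only [dif_pos h]
    · refine Or.inl ?_
      rw [hB'def]
      simp only [dif_neg h]
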